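/- If Q₁ and Q₂ are quadratic forms in Plücker coordinates that are Chow forms of one-dimensional degree-2 cycles Z₁, Z₂ in ℙ³ (i.e., their zero loci on G(2,4) are exactly the lines meeting Z₁, resp. Z₂), and Z₁ ≠ Z₂ as cycles with Z₁, Z₂ each a pair of distinct lines, then Q₁ and Q₂ are not proportional modulo the Plücker relation. -/

import Mathlib

open MvPolynomial

/-- The Plücker quadric `p01*p23 - p02*p13 + p03*p12`, with variables indexed
`0 ↦ p01, 1 ↦ p02, 2 ↦ p03, 3 ↦ p12, 4 ↦ p13, 5 ↦ p23`. -/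
noncomputable def pluckerP : MvPolynomial (Fin 6) ℂ :=
  X 0 * X 5 - X 1 * X 4 + X 2 * X 3

/-- The ∂-bracket `(∂Q/∂p01)(∂Q/∂p23) - (∂Q/∂p02)(∂Q/∂p13) + (∂Q/∂p03)(∂Q/∂p12)`. -/
noncomputable def dbracket (Q : MvPolynomial (Fin 6) ℂ) : MvPolynomial (Fin 6) ℂ :=
  pderiv 0 Q * pderiv 5 Q - pderiv 1 Q * pderiv 4 Q + pderiv 2 Q * pderiv 3 Q
/-- The polar bilinear form of the Plücker quadric:
`ω(p,q) = p01 q23 - p02 q13 + p03 q12 + p12 q03 - p13 q02 + p23 q01`. -/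
def plOmega (p q : Fin 6 → ℂ) : ℂ :=
  p 0 * q 5 - p 1 * q 4 + p 2 * q 3 + p 3 * q 2 - p 4 * q 1 + p 5 * q 0

/-- The linear form `p ↦ ω(p, q)` as a polynomial in the Plücker variables. -/
noncomputable def omegaForm (q : Fin 6 → ℂ) : MvPolynomial (Fin 6) ℂ :=
  C (q 5) * X 0 - C (q 4) * X 1 + C (q 3) * X 2
    + C (q 2) * X 3 - C (q 1) * X 4 + C (q 0) * X 5

/-- Evaluation of the Plücker quadric on a vector. -/
def plVal (q : Fin 6 → ℂ) : ℂ := q 0 * q 5 - q 1 * q 4 + q 2 * q 3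

/-- `v` and `w` are Plücker vectors of the same line (nonzero proportional). -/
def propTo (v w : Fin 6 → ℂ) : Prop := ∃ c : ℂ, c ≠ 0 ∧ w = c • v

-- nondegeneracy in second argument
lemma plOmega_nondeg {q : Fin 6 → ℂ} (h : ∀ p, plOmega p q = 0) : q = 0 := by
  funext j
  fin_cases j
  · simpa [plOmega, Pi.single_apply] using h (Pi.single 5 1)
  · simpa [plOmega, Pi.single_apply] using h (Pi.single 4 1)
  · simpa [plOmega, Pi.single_apply] using h (Pi.single 3 1)
  · simpa [plOmega, Pi.single_apply] using h (Pi.single 2 1)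
  · simpa [plOmega, Pi.single_apply] using h (Pi.single 1 1)
  · simpa [plOmega, Pi.single_apply] using h (Pi.single 0 1)

lemma plOmega_symm (p q : Fin 6 → ℂ) : plOmega p q = plOmega q p := by
  simp [plOmega]; ring

lemma exists_pair {q : Fin 6 → ℂ} (h : q ≠ 0) : ∃ r, plOmega r q ≠ 0 := by
  by_contra hc
  push_neg at hc
  exact h (plOmega_nondeg hc)

-- the functional p ↦ plOmega p q as a LinearMap
noncomputable def omLF (q : Fin 6 → ℂ) : (Fin 6 → ℂ) →ₗ[ℂ] ℂ where
  toFun p := plOmega p q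
  map_add' p r := by simp [plOmega]; ring
  map_smul' c p := by simp [plOmega]; ring

-- zero-product lemma for plOmega functionals
lemma zero_prod {u w : Fin 6 → ℂ} (h : ∀ p, plOmega p u * plOmega p w = 0) :
    u = 0 ∨ w = 0 := by
  by_cases hu : u = 0
  · exact Or.inl hu
  · obtain ⟨r, hr⟩ := exists_pair hu
    right
    apply plOmega_nondeg
    intro p
    have h1 := h (p + r)
    have h2 := h (p + (2:ℂ) • r)
    have hadd : ∀ (a b v : Fin 6 → ℂ) (t : ℂ), plOmega (a + t • b) v = plOmega a v + t * plOmega b v := by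
      intro a b v t; simp [plOmega]; ring
    have e1 : (plOmega p u + plOmega r u) * (plOmega p w + plOmega r w) = 0 := by
      have := h (p + (1:ℂ) • r); rw [hadd, hadd] at this; simpa using this
    have e2 : (plOmega p u + 2 * plOmega r u) * (plOmega p w + 2 * plOmega r w) = 0 := by
      have := h (p + (2:ℂ) • r); rw [hadd, hadd] at this; simpa using this
    have e0 := h p
    -- solve: with a := plOmega p u etc.
    set a := plOmega p u; set b := plOmega r u
    set x := plOmega p w; set y := plOmega r w
    -- from e0: a*x=0 ; e1: (a+b)(x+y)=0 ; e2: (a+2b)(x+2y)=0, b ≠ 0 ⇒ x = 0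
    -- derive: expand: ax + ay + bx + by = 0 ⇒ ay+bx+by=0 ; ax+2ay+2bx+4by=0 ⇒ 2ay+2bx+4by=0
    -- ⇒ 2(ay+bx+by)=0 minus: 2by - 0 ... (2ay+2bx+4by) - 2(ay+bx+by) = 2by = 0 ⇒ by=0 ⇒ y=0 (b≠0)
    -- then ay+bx = 0 ⇒ bx = 0 ⇒ x = 0. Then plOmega p w = x = 0.
    have hby : b * y = 0 := by linear_combination (e2 - 2 * e1 + e0) / 2
    have hy : y = 0 := by
      rcases mul_eq_zero.mp hby with h' | h'
      · exact absurd h' hr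
      · exact h'
    have hbx : b * x = 0 := by linear_combination e1 - e0 - (a + b) * hy
    rcases mul_eq_zero.mp hbx with h' | h'
    · exact absurd h' hr
    · exact h'

-- ker inclusion gives scalar multiple
lemma ker_le_scalar {q a : Fin 6 → ℂ} (hq : q ≠ 0)
    (h : ∀ p, plOmega p q = 0 → plOmega p a = 0) : ∃ c : ℂ, a = c • q := by
  obtain ⟨r, hr⟩ := exists_pair hq
  refine ⟨plOmega r a / plOmega r q, ?_⟩
  have key : ∀ p, plOmega p a = (plOmega r a / plOmega r q) * plOmega p q := by
    intro p
    have hsub : ∀ (x y v : Fin 6 → ℂ) (t : ℂ), plOmega (x - t • y) v = plOmega x v - t * plOmega y v := by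
      intro x y v t; simp [plOmega]; ring
    have hker : plOmega (p - (plOmega p q / plOmega r q) • r) q = 0 := by
      rw [hsub]; field_simp; ring
    have := h _ hker
    rw [hsub] at this
    field_simp at this ⊢
    linear_combination this
  have : ∀ p, plOmega p (a - (plOmega r a / plOmega r q) • q) = 0 := by
    intro p
    have h2 : ∀ (v x y : Fin 6 → ℂ) (t : ℂ), plOmega v (x - t • y) = plOmega v x - t * plOmega v y := by
      intro v x y t; simp [plOmega]; ring
    rw [h2, key p]; ring
  have := plOmega_nondeg this
  exact sub_eq_zero.mp this

lemma propTo_of_ker {α : ℂ} (hα : α ≠ 0) {q₁ q₂ a b : Fin 6 → ℂ}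
    (hq₁ : q₁ ≠ 0) (ha : a ≠ 0)
    (hk : ∀ p, plOmega p q₁ = 0 → plOmega p a = 0)
    (H : ∀ p, plOmega p q₁ * plOmega p q₂ = α * (plOmega p a * plOmega p b)) :
    propTo q₁ a ∧ propTo q₂ b := by
  obtain ⟨c, hc⟩ := ker_le_scalar hq₁ hk
  have hcne : c ≠ 0 := by
    rintro rfl
    rw [zero_smul] at hc
    exact ha hc
  refine ⟨⟨c, hcne, hc⟩, ?_⟩
  have hpa : ∀ p, plOmega p a = c * plOmega p q₁ := by
    intro p; rw [hc]; simp [plOmega]; ring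
  have H2 : ∀ p, plOmega p q₁ * plOmega p (q₂ - (α * c) • b) = 0 := by
    intro p
    have h2 : plOmega p (q₂ - (α*c) • b) = plOmega p q₂ - (α*c) * plOmega p b := by
      simp [plOmega]; ring
    rw [h2]
    have hH := H p
    rw [hpa p] at hH
    linear_combination hH
  rcases zero_prod H2 with h | h
  · exact absurd h hq₁
  · have hq2 : q₂ = (α*c) • b := sub_eq_zero.mp h
    have hac : α * c ≠ 0 := mul_ne_zero hα hcne
    refine ⟨(α*c)⁻¹, inv_ne_zero hac, ?_⟩
    rw [hq2, smul_smul, inv_mul_cancel₀ hac, one_smul]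

lemma ker_disj {α : ℂ} (hα : α ≠ 0) {q₁ q₂ a b : Fin 6 → ℂ}
    (H : ∀ p, plOmega p q₁ * plOmega p q₂ = α * (plOmega p a * plOmega p b)) :
    (∀ p, plOmega p q₁ = 0 → plOmega p a = 0) ∨
    (∀ p, plOmega p q₁ = 0 → plOmega p b = 0) := by
  by_contra hc
  push_neg at hc
  obtain ⟨⟨p, hp1, hpa⟩, ⟨p', hp1', hpb⟩⟩ := hc
  have addt : ∀ (x y v : Fin 6 → ℂ) (t : ℂ),
      plOmega (x + t • y) v = plOmega x v + t * plOmega y v := by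
    intro x y v t; simp [plOmega]; ring
  have ht : ∃ t : ℂ, plOmega p a + t * plOmega p' a ≠ 0 ∧
      plOmega p b + t * plOmega p' b ≠ 0 := by
    by_contra hc2
    push_neg at hc2
    have hd0 : ∀ t : ℂ, plOmega p a + t * plOmega p' a = 0 ∨
        plOmega p b + t * plOmega p' b = 0 := by
      intro t
      by_cases h : plOmega p a + t * plOmega p' a = 0
      · exact Or.inl h
      · exact Or.inr (hc2 t h)
    have h0 := hd0 0
    have h1 := hd0 1
    have h2 := hd0 2
    rcases h0 with h0 | h0
    · exact hpa (by linear_combination h0)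
    · rcases h1 with h1 | h1
      · rcases h2 with h2 | h2
        · exact hpa (by linear_combination 2 * h1 - h2)
        · exact hpb (by linear_combination (h2 - h0) / 2)
      · exact hpb (by linear_combination h1 - h0)
  obtain ⟨t, hta, htb⟩ := ht
  have e := H (p + t • p')
  simp only [addt] at e
  rw [hp1, hp1'] at e
  exact (mul_ne_zero hα (mul_ne_zero hta htb)) (by linear_combination -e)

lemma common_ker (q₁ q₂ q₃ q₄ : Fin 6 → ℂ) :
    ∃ p : Fin 6 → ℂ, p ≠ 0 ∧ plOmega p q₁ = 0 ∧ plOmega p q₂ = 0 ∧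
      plOmega p q₃ = 0 ∧ plOmega p q₄ = 0 := by
  let f : (Fin 6 → ℂ) →ₗ[ℂ] (Fin 4 → ℂ) :=
    LinearMap.pi ![omLF q₁, omLF q₂, omLF q₃, omLF q₄]
  have hker : LinearMap.ker f ≠ ⊥ := by
    intro hbot
    have h1 := LinearMap.finrank_range_add_finrank_ker f
    rw [hbot, finrank_bot] at h1
    have h2 : Module.finrank ℂ (LinearMap.range f) ≤ Module.finrank ℂ (Fin 4 → ℂ) :=
      Submodule.finrank_le _
    simp [Module.finrank_pi] at h1 h2
    omega
  obtain ⟨p, hp, hp0⟩ := Submodule.exists_mem_ne_zero_of_ne_bot hker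
  have hfp : f p = 0 := hp
  exact ⟨p, hp0, congrFun hfp 0, congrFun hfp 1, congrFun hfp 2, congrFun hfp 3⟩

lemma eval_omegaForm (p q : Fin 6 → ℂ) : eval p (omegaForm q) = plOmega p q := by
  simp [omegaForm, plOmega]; ring

lemma eval_pluckerP (p : Fin 6 → ℂ) : eval p pluckerP = plVal p := by
  simp [pluckerP, plVal]


/-- Injectivity of the Chow embedding on pairs of lines: if `Z₁ = ℓ₁ + ℓ₂` and
`Z₂ = ℓ₁' + ℓ₂'` are distinct cycles, each a pair of distinct lines, then their Chow
forms are not proportional modulo the Plücker relation. -/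
theorem chow_forms_of_distinct_line_pairs_not_proportional
    (q₁ q₂ q₁' q₂' : Fin 6 → ℂ)
    (h₁ : plVal q₁ = 0) (h₂ : plVal q₂ = 0) (h₁' : plVal q₁' = 0) (h₂' : plVal q₂' = 0)
    (hq₁ : q₁ ≠ 0) (hq₂ : q₂ ≠ 0) (hq₁' : q₁' ≠ 0) (hq₂' : q₂' ≠ 0)
    (hd : ¬ propTo q₁ q₂) (hd' : ¬ propTo q₁' q₂')
    (hZ : ¬ ((propTo q₁ q₁' ∧ propTo q₂ q₂') ∨ (propTo q₁ q₂' ∧ propTo q₂ q₁'))) :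
    ¬ ∃ α β : ℂ, α ≠ 0 ∧
      omegaForm q₁ * omegaForm q₂ =
        C α * (omegaForm q₁' * omegaForm q₂') + C β * pluckerP := by
  rintro ⟨α, β, hα, heq⟩
  have hEval : ∀ p, plOmega p q₁ * plOmega p q₂ =
      α * (plOmega p q₁' * plOmega p q₂') + β * plVal p := by
    intro p
    have h := congrArg (eval p) heq
    simp only [map_add, map_mul, eval_C, eval_omegaForm, eval_pluckerP] at h
    exact h
  obtain ⟨p₀, hp0, hk1, hk2, hk3, hk4⟩ := common_ker q₁ q₂ q₁' q₂'
  have hβ : β = 0 := by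
    by_contra hβ
    apply hp0
    apply plOmega_nondeg (q := p₀)
    intro r
    rw [← plOmega_symm]
    have hr : β * plOmega p₀ r = 0 := by
      have e1 := hEval (p₀ + r)
      have e2 := hEval r
      have e3 := hEval p₀
      have hadd1 : ∀ v, plOmega (p₀ + r) v = plOmega p₀ v + plOmega r v := by
        intro v; simp [plOmega]; ring
      have hpv : plVal (p₀ + r) = plVal p₀ + plVal r + plOmega p₀ r := by
        simp [plVal, plOmega]; ring
      rw [hadd1, hadd1, hadd1, hadd1, hpv, hk1, hk2, hk3, hk4] at e1
      rw [hk1, hk2, hk3, hk4] at e3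
      linear_combination e2 + e3 - e1
    rcases mul_eq_zero.mp hr with h | h
    · exact absurd h hβ
    · exact h
  have H : ∀ p, plOmega p q₁ * plOmega p q₂ =
      α * (plOmega p q₁' * plOmega p q₂') := by
    intro p
    linear_combination hEval p + plVal p * hβ
  rcases ker_disj hα H with hk | hk
  · exact hZ (Or.inl (propTo_of_ker hα hq₁ hq₁' hk H))
  · have H' : ∀ p, plOmega p q₁ * plOmega p q₂ =
        α * (plOmega p q₂' * plOmega p q₁') := by
      intro p; linear_combination H p
    exact hZ (Or.inr (propTo_of_ker hα hq₁ hq₂' hk H'))
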